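/- arXiv:2311.01801 — 4 statements merged into one kernel-verified Lean document; each statement's English description precedes it below -/
import Mathlib

section
/- For all complex numbers z₁, z₂ one has |Im[ (conj(z₁ − z₂)) · (z₁ log|z₁| − z₂ log|z₂|) ]| ≤ |z₁ − z₂|², where the expression z log|z| is interpreted as 0 when z = 0. -/
lemma key_aux (u : ℝ) (hu : 1 ≤ u) : (Real.log u)^2 * u^2 ≤ (u^2 - 1)^2 := by
  have h0 : (0:ℝ) < u := lt_of_lt_of_le one_pos hu
  have h1 : Real.log u ≤ u - 1 := Real.log_le_sub_one_of_pos h0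
  have h2 : 0 ≤ Real.log u := Real.log_nonneg hu
  nlinarith [sq_nonneg (u - 1), sq_nonneg (Real.log u),
    mul_le_mul h1 h1 h2 (by linarith : (0:ℝ) ≤ u - 1)]

lemma key_le (a b : ℝ) (ha : 0 < a) (hb : 0 < b) (hba : b ≤ a) :
    (Real.log a - Real.log b)^2 * (a*b) ≤ 4*(a-b)^2 := by
  set u := Real.sqrt (a/b) with hudef
  have hab : 1 ≤ a/b := (one_le_div hb).2 hba
  have hu1 : 1 ≤ u := by
    rw [hudef]
    exact Real.one_le_sqrt.2 hab
  have hu2 : u^2 = a/b := Real.sq_sqrt (by positivity)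
  have hlog : Real.log a - Real.log b = 2 * Real.log u := by
    rw [← Real.log_div ha.ne' hb.ne', ← hu2, Real.log_pow]
    push_cast; ring
  have ha' : a = b * u^2 := by rw [hu2]; field_simp
  rw [hlog, ha']
  have h := key_aux u hu1
  nlinarith [sq_nonneg b, hb.le, mul_le_mul_of_nonneg_left h (by positivity : (0:ℝ) ≤ 4*b^2)]

lemma key (a b : ℝ) (ha : 0 < a) (hb : 0 < b) :
    (Real.log a - Real.log b)^2 * (a*b) ≤ 4*(a-b)^2 := by
  rcases le_total b a with h | h
  · exact key_le a b ha hb h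
  · have := key_le b a hb ha h
    nlinarith [this]



/-- For all complex numbers `z₁, z₂`,
`|Im[ conj(z₁ - z₂) * (z₁ log|z₁| - z₂ log|z₂|) ]| ≤ |z₁ - z₂|²`.
Here `Real.log 0 = 0`, so `z * log |z|` is `0` when `z = 0`. -/
theorem abs_im_conj_sub_mul_log_le_sq (z₁ z₂ : ℂ) :
    |((starRingEnd ℂ) (z₁ - z₂) *
        (z₁ * (Real.log ‖z₁‖ : ℂ) - z₂ * (Real.log ‖z₂‖ : ℂ))).im|
      ≤ ‖z₁ - z₂‖ ^ 2 := by
  set r₁ := ‖z₁‖ with hr₁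
  set r₂ := ‖z₂‖ with hr₂
  set L := Real.log r₁ - Real.log r₂ with hL
  set R := ((starRingEnd ℂ) z₁ * z₂).re with hR
  set I := ((starRingEnd ℂ) z₁ * z₂).im with hI
  have hid : ((starRingEnd ℂ) (z₁ - z₂) *
        (z₁ * (Real.log r₁ : ℂ) - z₂ * (Real.log r₂ : ℂ))).im = L * I := by
    simp [hL, hI, Complex.mul_im, Complex.mul_re, Complex.sub_re, Complex.sub_im]
    ring
  rw [hid]
  rcases eq_or_ne z₁ 0 with h1 | h1
  · simp [hI, h1]
  rcases eq_or_ne z₂ 0 with h2 | h2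
  · simp [hI, h2]
  have hr1 : 0 < r₁ := by simpa [hr₁] using norm_pos_iff.mpr h1
  have hr2 : 0 < r₂ := by simpa [hr₂] using norm_pos_iff.mpr h2
  have h3 : L^2 * (r₁*r₂) ≤ 4*(r₁-r₂)^2 := key r₁ r₂ hr1 hr2
  have habs : ‖(starRingEnd ℂ) z₁ * z₂‖ = r₁ * r₂ := by
    simp [map_mul, hr₁, hr₂]
  have h1' : R^2 + I^2 = (r₁*r₂)^2 := by
    have := Complex.sq_norm ((starRingEnd ℂ) z₁ * z₂)
    rw [habs] at this
    rw [this, Complex.normSq_apply]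
    ring
  have hRle : R ≤ r₁ * r₂ := by
    have := Complex.re_le_norm ((starRingEnd ℂ) z₁ * z₂)
    rwa [habs] at this
  have h2' : ‖z₁ - z₂‖ ^ 2 = r₁^2 + r₂^2 - 2*R := by
    rw [Complex.sq_norm, Complex.normSq_apply, hr₁, hr₂, Complex.sq_norm z₁, Complex.sq_norm z₂,
      Complex.normSq_apply, Complex.normSq_apply]
    simp [hR, Complex.mul_re, Complex.sub_re, Complex.sub_im]
    ring
  rw [h2']
  have hrhs : 0 ≤ r₁^2 + r₂^2 - 2*R := by nlinarith [sq_nonneg (r₁ - r₂)]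
  refine le_of_pow_le_pow_left₀ two_ne_zero hrhs ?_
  rw [sq_abs]
  have hd : 0 ≤ r₁*r₂ - R := by linarith
  have hA : L^2 * I^2 ≤ L^2 * (2*(r₁*r₂)*(r₁*r₂ - R)) := by
    apply mul_le_mul_of_nonneg_left _ (sq_nonneg L)
    nlinarith
  have hB : (2*(r₁*r₂ - R)) * (L^2*(r₁*r₂)) ≤ (2*(r₁*r₂ - R)) * (4*(r₁-r₂)^2) :=
    mul_le_mul_of_nonneg_left h3 (by linarith)
  nlinarith [sq_nonneg ((r₁-r₂)^2 - 2*(r₁*r₂ - R)), hA, hB]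
end

section
/- For all complex numbers z₁, z₂ and all real numbers ε₁, ε₂ ≥ 0 one has |Im[ (conj(z₁ − z₂)) · ( z₁ log(|z₁| + ε₁) − z₂ log(|z₂| + ε₂) ) ]| ≤ |z₁ − z₂|² + |ε₁ − ε₂| · |z₁ − z₂|, where the expression z log(|z| + ε) is interpreted as 0 when z = 0 and ε = 0. -/
private lemma im_key (z₁ z₂ : ℂ) (a b : ℝ) :
    ((starRingEnd ℂ) (z₁ - z₂) * (z₁ * (a : ℂ) - z₂ * (b : ℂ))).im
      = (a - b) * ((starRingEnd ℂ) (z₁ - z₂) * z₂).im := by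
  simp only [Complex.mul_im, Complex.mul_re, Complex.sub_re, Complex.sub_im,
    Complex.conj_re, Complex.conj_im, Complex.ofReal_re, Complex.ofReal_im]
  ring

private lemma log_sub_log_bound {x y m : ℝ} (hx : 0 < x) (hy : 0 < y)
    (hm : 0 ≤ m) (hmx : m ≤ x) (hmy : m ≤ y) :
    |m * (Real.log x - Real.log y)| ≤ |x - y| := by
  rw [abs_le]
  constructor
  · rcases le_or_gt x y with h | h
    · have h1 : Real.log y - Real.log x = Real.log (y / x) := (Real.log_div hy.ne' hx.ne').symm
      have h2 : Real.log (y / x) ≤ y / x - 1 := Real.log_le_sub_one_of_pos (by positivity)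
      have : m * (Real.log y - Real.log x) ≤ m * (y / x - 1) := by
        rw [h1]; exact mul_le_mul_of_nonneg_left h2 hm
      have h3 : m * (y / x - 1) ≤ y - x := by
        have e : m * (y / x - 1) = m * (y - x) / x := by field_simp
        rw [e, div_le_iff₀ hx]
        nlinarith
      have hxy : |x - y| = y - x := by rw [abs_sub_comm]; exact abs_of_nonneg (by linarith)
      nlinarith
    · have : 0 ≤ m * (Real.log x - Real.log y) := by
        apply mul_nonneg hm
        have := Real.log_le_log hy h.le
        linarith
      nlinarith [abs_nonneg (x - y)]
  · rcases le_or_gt x y with h | h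
    · have : m * (Real.log x - Real.log y) ≤ 0 := by
        apply mul_nonpos_of_nonneg_of_nonpos hm
        have := Real.log_le_log hx h
        linarith
      nlinarith [abs_nonneg (x - y)]
    · have h1 : Real.log x - Real.log y = Real.log (x / y) := (Real.log_div hx.ne' hy.ne').symm
      have h2 : Real.log (x / y) ≤ x / y - 1 := Real.log_le_sub_one_of_pos (by positivity)
      have h3 : m * (x / y - 1) ≤ x - y := by
        have e : m * (x / y - 1) = m * (x - y) / y := by field_simp
        rw [e, div_le_iff₀ hy]
        nlinarith
      have hxy : |x - y| = x - y := abs_of_nonneg (by linarith)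
      have : m * (Real.log x - Real.log y) ≤ m * (x / y - 1) := by
        rw [h1]; exact mul_le_mul_of_nonneg_left h2 hm
      linarith

private lemma main_aux (z₁ z₂ : ℂ) (ε₁ ε₂ : ℝ) (hε₁ : 0 ≤ ε₁) (hε₂ : 0 ≤ ε₂)
    (hle : ‖z₂‖ ≤ ‖z₁‖) :
    |((starRingEnd ℂ) (z₁ - z₂) *
        (z₁ * (Real.log (‖z₁‖ + ε₁) : ℂ) -
          z₂ * (Real.log (‖z₂‖ + ε₂) : ℂ))).im|
      ≤ ‖z₁ - z₂‖ ^ 2 + |ε₁ - ε₂| * ‖z₁ - z₂‖ := by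
  set a := Real.log (‖z₁‖ + ε₁)
  set b := Real.log (‖z₂‖ + ε₂)
  rw [im_key]
  rcases eq_or_lt_of_le (norm_nonneg z₂) with h0 | h0
  · have : z₂ = 0 := norm_eq_zero.mp h0.symm
    simp [this]
    positivity
  · have hx : (0:ℝ) < ‖z₁‖ + ε₁ := by linarith
    have hy : (0:ℝ) < ‖z₂‖ + ε₂ := by linarith
    have key : |‖z₂‖ * (a - b)| ≤ |(‖z₁‖ + ε₁) - (‖z₂‖ + ε₂)| :=
      log_sub_log_bound hx hy h0.le (by linarith) (by linarith)
    have habs : |(‖z₁‖ + ε₁) - (‖z₂‖ + ε₂)|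
        ≤ ‖z₁ - z₂‖ + |ε₁ - ε₂| := by
      have h1 : |‖z₁‖ - ‖z₂‖| ≤ ‖z₁ - z₂‖ :=
        abs_norm_sub_norm_le z₁ z₂
      calc |(‖z₁‖ + ε₁) - (‖z₂‖ + ε₂)|
          = |(‖z₁‖ - ‖z₂‖) + (ε₁ - ε₂)| := by ring_nf
        _ ≤ |‖z₁‖ - ‖z₂‖| + |ε₁ - ε₂| := abs_add_le _ _
        _ ≤ _ := by linarith
    have him : |((starRingEnd ℂ) (z₁ - z₂) * z₂).im|
        ≤ ‖z₁ - z₂‖ * ‖z₂‖ := by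
      calc |((starRingEnd ℂ) (z₁ - z₂) * z₂).im|
          ≤ ‖(starRingEnd ℂ) (z₁ - z₂) * z₂‖ := Complex.abs_im_le_norm _
        _ = ‖z₁ - z₂‖ * ‖z₂‖ := by
            rw [norm_mul, Complex.norm_conj]
    calc |(a - b) * ((starRingEnd ℂ) (z₁ - z₂) * z₂).im|
        = |a - b| * |((starRingEnd ℂ) (z₁ - z₂) * z₂).im| := abs_mul _ _
      _ ≤ |a - b| * (‖z₁ - z₂‖ * ‖z₂‖) := by
          exact mul_le_mul_of_nonneg_left him (abs_nonneg _)
      _ = (|‖z₂‖ * (a - b)|) * ‖z₁ - z₂‖ := by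
          rw [abs_mul, abs_of_pos h0]; ring
      _ ≤ (‖z₁ - z₂‖ + |ε₁ - ε₂|) * ‖z₁ - z₂‖ := by
          apply mul_le_mul_of_nonneg_right (key.trans habs) (norm_nonneg _)
      _ = ‖z₁ - z₂‖ ^ 2 + |ε₁ - ε₂| * ‖z₁ - z₂‖ := by ring

/-- For all `z₁ z₂ : ℂ` and `ε₁ ε₂ ≥ 0`,
`|Im[ conj(z₁ - z₂) * (z₁ log(|z₁|+ε₁) - z₂ log(|z₂|+ε₂)) ]|
  ≤ |z₁ - z₂|² + |ε₁ - ε₂|·|z₁ - z₂|`.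
Since `Real.log 0 = 0`, the expression `z * log (|z| + ε)` equals `0` when `z = 0` and `ε = 0`. -/
theorem abs_im_conj_sub_mul_log_add_eps_le (z₁ z₂ : ℂ) (ε₁ ε₂ : ℝ)
    (hε₁ : 0 ≤ ε₁) (hε₂ : 0 ≤ ε₂) :
    |((starRingEnd ℂ) (z₁ - z₂) *
        (z₁ * (Real.log (‖z₁‖ + ε₁) : ℂ) -
          z₂ * (Real.log (‖z₂‖ + ε₂) : ℂ))).im|
      ≤ ‖z₁ - z₂‖ ^ 2 + |ε₁ - ε₂| * ‖z₁ - z₂‖ := by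
  rcases le_total (‖z₂‖) (‖z₁‖) with h | h
  · exact main_aux z₁ z₂ ε₁ ε₂ hε₁ hε₂ h
  · have := main_aux z₂ z₁ ε₂ ε₁ hε₂ hε₁ h
    have hsym : ((starRingEnd ℂ) (z₂ - z₁) *
        (z₂ * (Real.log (‖z₂‖ + ε₂) : ℂ) -
          z₁ * (Real.log (‖z₁‖ + ε₁) : ℂ)))
        = ((starRingEnd ℂ) (z₁ - z₂) *
        (z₁ * (Real.log (‖z₁‖ + ε₁) : ℂ) -
          z₂ * (Real.log (‖z₂‖ + ε₂) : ℂ))) := by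
      rw [show z₂ - z₁ = -(z₁ - z₂) by ring, map_neg]
      ring
    rw [hsym, norm_sub_rev z₂ z₁, abs_sub_comm ε₂ ε₁] at this
    exact this
end

section
/- Let θ : ℂ → ℝ be Lipschitz continuous with Lipschitz constant L, satisfying 0 ≤ θ ≤ 1, θ(z) = 1 for |z| ≤ 1 and θ(z) = 0 for |z| ≥ 2, and set g₁(z) = θ(z)·z·log(|z|²) with g₁(0) = 0. Let α ∈ (0,1), d ≥ 1, and let ω ⊆ ℝ^d be a measurable set of finite Lebesgue measure |ω|. Then there exists C > 0, depending only on α and L, such that for all u, v ∈ L²(ω): ‖g₁ ∘ u − g₁ ∘ v‖_{L²(ω)} ≤ C |ω|^{(1−α)/2} ‖u − v‖_{L²(ω)}^α. -/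
open MeasureTheory

noncomputable def Complex.abs : AbsoluteValue ℂ ℝ := NormedField.toAbsoluteValue ℂ

lemma Complex.norm_eq_abs (z : ℂ) : ‖z‖ = Complex.abs z := rfl

lemma Complex.abs_ofReal (r : ℝ) : Complex.abs (r : ℂ) = |r| := by
  rw [← Complex.norm_eq_abs, Complex.norm_real, Real.norm_eq_abs]

lemma auxG1_log_le {x β : ℝ} (hx : 0 < x) (hβ : 0 < β) : Real.log x ≤ x ^ β / β := by
  rw [le_div_iff₀ hβ]
  have h1 : Real.log (x ^ β) = β * Real.log x := Real.log_rpow hx β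
  have h2 : Real.log (x ^ β) ≤ x ^ β - 1 :=
    Real.log_le_sub_one_of_pos (Real.rpow_pos_of_pos hx β)
  nlinarith

lemma auxG1_le_rpow {δ α : ℝ} (hδ : 0 ≤ δ) (hδ4 : δ ≤ 4) (hα0 : 0 < α) (hα1 : α < 1) :
    δ ≤ 4 * δ ^ α := by
  rcases eq_or_lt_of_le hδ with h | h
  · simp [← h, Real.zero_rpow (ne_of_gt hα0)]
  have h4 : (4:ℝ) ^ (1-α) ≤ 4 := by
    nth_rewrite 2 [← Real.rpow_one 4]
    exact Real.rpow_le_rpow_of_exponent_le (by norm_num) (by linarith)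
  have hδp : δ ^ (1-α) ≤ 4 ^ (1-α) := Real.rpow_le_rpow hδ hδ4 (by linarith)
  have hsplit : δ = δ ^ (1-α) * δ ^ α := by
    rw [← Real.rpow_add h]; norm_num
  have hpow : 0 ≤ δ ^ α := Real.rpow_nonneg hδ α
  nlinarith

lemma auxG1_log_bound {α r δ : ℝ} (hα0 : 0 < α) (hα1 : α < 1) (hr0 : 0 < r) (hr2 : r ≤ 2)
    (hδ0 : 0 ≤ δ) (hδr : δ ≤ 2 * r) :
    δ * |Real.log r| ≤ (4 + 2 / (1 - α)) * δ ^ α := by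
  have h1α : (0:ℝ) < 1 - α := by linarith
  have hdivpos : (0:ℝ) ≤ 2 / (1 - α) := by positivity
  have hpow : 0 ≤ δ ^ α := Real.rpow_nonneg hδ0 α
  rcases eq_or_lt_of_le hδ0 with h | hδpos
  · simp [← h, Real.zero_rpow (ne_of_gt hα0)]
  rcases le_or_gt 1 r with h1 | h1
  · have hlr : |Real.log r| ≤ 1 := by
      rw [abs_of_nonneg (Real.log_nonneg h1)]
      have := Real.log_le_sub_one_of_pos hr0
      linarith
    have h4 := auxG1_le_rpow hδ0 (by linarith) hα0 hα1
    nlinarith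
  · have hlognn : Real.log r ≤ 0 := Real.log_nonpos hr0.le h1.le
    set R := r ^ (1-α) with hR
    have hRpos : 0 < R := Real.rpow_pos_of_pos hr0 _
    have hlr : |Real.log r| ≤ R⁻¹ / (1-α) := by
      rw [abs_of_nonpos hlognn, ← Real.log_inv]
      have := auxG1_log_le (inv_pos.mpr hr0) h1α
      rw [Real.inv_rpow hr0.le] at this
      rwa [hR]
    have hδp : δ ^ (1-α) ≤ 2 * R := by
      calc δ ^ (1-α) ≤ (2*r) ^ (1-α) := Real.rpow_le_rpow hδ0 hδr (by linarith)
      _ = 2 ^ (1-α) * R := by rw [Real.mul_rpow (by norm_num) hr0.le]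
      _ ≤ 2 * R := by
          have h2 : (2:ℝ) ^ (1-α) ≤ 2 := by
            nth_rewrite 2 [← Real.rpow_one 2]
            exact Real.rpow_le_rpow_of_exponent_le (by norm_num) (by linarith)
          nlinarith
    have hsplit : δ = δ ^ (1-α) * δ ^ α := by
      rw [← Real.rpow_add hδpos]; norm_num
    calc δ * |Real.log r| = δ ^ (1-α) * |Real.log r| * δ ^ α := by
          conv_lhs => rw [hsplit]
          ring
    _ ≤ (2*R) * (R⁻¹/(1-α)) * δ ^ α := by
          apply mul_le_mul_of_nonneg_right _ hpow
          exact mul_le_mul hδp hlr (abs_nonneg _) (by positivity)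
    _ = 2/(1-α) * δ ^ α := by
          field_simp
    _ ≤ (4 + 2/(1-α)) * δ ^ α := by nlinarith

lemma auxG1_f_bound {z : ℂ} (hz : Complex.abs z ≤ 2) :
    Complex.abs (z * (Real.log (Complex.abs z ^ 2) : ℂ)) ≤ 4 := by
  rw [map_mul, Complex.abs_ofReal]
  set r := Complex.abs z with hr
  have hr0 : 0 ≤ r := Complex.abs.nonneg z
  have hlog : Real.log (r^2) = 2 * Real.log r := by
    rw [Real.log_pow]; norm_num
  rw [hlog]
  rcases eq_or_lt_of_le hr0 with h | h
  · simp [← h]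
  rcases le_or_gt r 1 with h1 | h1
  · have hlr : Real.log r ≤ 0 := Real.log_nonpos hr0 h1
    rw [abs_of_nonpos (by linarith : 2 * Real.log r ≤ 0)]
    have hb : Real.log r⁻¹ ≤ r⁻¹ := by
      have := Real.log_le_sub_one_of_pos (inv_pos.mpr h)
      linarith
    have hinv : Real.log r⁻¹ = -Real.log r := Real.log_inv r
    have hrr : r * r⁻¹ = 1 := mul_inv_cancel₀ h.ne'
    nlinarith [mul_le_mul_of_nonneg_left hb hr0]
  · have hl0 : 0 ≤ Real.log r := Real.log_nonneg h1.le
    have hl : Real.log r ≤ 1 := by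
      have := Real.log_le_sub_one_of_pos h
      linarith
    rw [abs_of_nonneg (by linarith : (0:ℝ) ≤ 2 * Real.log r)]
    nlinarith

lemma auxG1_min_bound {y δ K M α : ℝ} (hα0 : 0 < α) (hα1 : α < 1) (hδ0 : 0 ≤ δ)
    (h1 : y ≤ K * δ) (h2 : y ≤ M) (hMK : M ≤ K) (hM0 : 0 ≤ M) :
    y ≤ K * δ ^ α := by
  have hK0 : 0 ≤ K := le_trans hM0 hMK
  rcases eq_or_lt_of_le hδ0 with h | hδpos
  · rw [← h] at h1 ⊢
    rw [Real.zero_rpow (ne_of_gt hα0)]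
    simpa using h1
  rcases le_or_gt δ 1 with hd1 | hd1
  · have : δ ^ (1:ℝ) ≤ δ ^ α :=
      Real.rpow_le_rpow_of_exponent_ge hδpos hd1 (by linarith)
    rw [Real.rpow_one] at this
    nlinarith
  · have : (1:ℝ) ≤ δ ^ α := by
      have := Real.rpow_le_rpow (by norm_num : (0:ℝ) ≤ 1) hd1.le hα0.le
      rwa [Real.one_rpow] at this
    nlinarith
lemma auxG1_f_holder {α : ℝ} (hα0 : 0 < α) (hα1 : α < 1) {z w : ℂ}
    (hsw : Complex.abs w ≤ Complex.abs z) (hz2 : Complex.abs z ≤ 2) :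
    Complex.abs (z * (Real.log (Complex.abs z ^ 2) : ℂ)
        - w * (Real.log (Complex.abs w ^ 2) : ℂ))
      ≤ (16 + 4/(1-α)) * Complex.abs (z - w) ^ α := by
  have h1α : (0:ℝ) < 1 - α := by linarith
  have hCnn : (0:ℝ) ≤ 16 + 4/(1-α) := by positivity
  set r := Complex.abs z with hr
  set s := Complex.abs w with hs
  set δ := Complex.abs (z - w) with hδ
  have hδ0 : 0 ≤ δ := Complex.abs.nonneg _
  have hpow : 0 ≤ δ ^ α := Real.rpow_nonneg hδ0 α
  by_cases hz0 : z = 0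
  · have hw0 : w = 0 := by
      rw [hr, hz0, map_zero] at hsw
      exact Complex.abs.eq_zero.mp (le_antisymm hsw (Complex.abs.nonneg w))
    have hL : z * (Real.log (r ^ 2) : ℂ) - w * (Real.log (s ^ 2) : ℂ) = 0 := by
      rw [hz0, hw0]; ring
    rw [hL, map_zero]
    exact mul_nonneg hCnn hpow
  have hr0 : 0 < r := by
    rw [hr]; exact Complex.abs.pos hz0
  have hs0 : 0 ≤ s := Complex.abs.nonneg _
  have hδr : δ ≤ 2 * r := by
    have := norm_sub_le z w
    simp only [Complex.norm_eq_abs] at this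
    rw [hδ, hr]; rw [hr] at hsw; linarith [hsw]
  have hrs : r - s ≤ δ := by
    have := norm_sub_norm_le z w
    simpa [Complex.norm_eq_abs, ← hr, ← hs, ← hδ] using this
  -- identity
  have hid : z * (Real.log (r ^ 2) : ℂ) - w * (Real.log (s ^ 2) : ℂ)
      = (z - w) * (Real.log (r ^ 2) : ℂ)
        + w * ((Real.log (r ^ 2) - Real.log (s ^ 2) : ℝ) : ℂ) := by
    push_cast
    ring
  rw [hid]
  have hlogr : Real.log (r ^ 2) = 2 * Real.log r := by rw [Real.log_pow]; norm_num
  have hlogs : Real.log (s ^ 2) = 2 * Real.log s := by rw [Real.log_pow]; norm_num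
  have hT1 : Complex.abs ((z - w) * (Real.log (r ^ 2) : ℂ)) ≤ (8 + 4/(1-α)) * δ ^ α := by
    rw [map_mul, Complex.abs_ofReal, ← hδ, hlogr]
    have : δ * |2 * Real.log r| = 2 * (δ * |Real.log r|) := by
      rw [abs_mul]; norm_num; ring
    rw [this]
    have hb := auxG1_log_bound hα0 hα1 hr0 hz2 hδ0 hδr
    have h2 : (8 + 4/(1-α)) * δ ^ α = 2 * ((4 + 2/(1-α)) * δ ^ α) := by ring
    rw [h2]
    linarith
  have hT2 : Complex.abs (w * ((Real.log (r ^ 2) - Real.log (s ^ 2) : ℝ) : ℂ)) ≤ 8 * δ ^ α := by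
    rw [map_mul, Complex.abs_ofReal, ← hs]
    have key : s * |Real.log (r^2) - Real.log (s^2)| ≤ 2 * δ := by
      rcases eq_or_lt_of_le hs0 with h | hspos
      · rw [← h]; simp; positivity
      · rw [hlogr, hlogs]
        have hlm : Real.log s ≤ Real.log r := Real.log_le_log hspos hsw
        have habs : |2 * Real.log r - 2 * Real.log s| = 2 * (Real.log r - Real.log s) := by
          rw [abs_of_nonneg (by linarith)]; ring
        rw [habs]
        have hdiv : Real.log r - Real.log s = Real.log (r / s) :=
          (Real.log_div hr0.ne' hspos.ne').symm
        have hle : Real.log (r / s) ≤ r / s - 1 :=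
          Real.log_le_sub_one_of_pos (div_pos hr0 hspos)
        have : s * (Real.log r - Real.log s) ≤ r - s := by
          rw [hdiv]
          have := mul_le_mul_of_nonneg_left hle hspos.le
          have hsr : s * (r / s - 1) = r - s := by field_simp
          linarith [hsr ▸ this]
        nlinarith
    have hδ4 : δ ≤ 4 := by linarith
    have := auxG1_le_rpow hδ0 hδ4 hα0 hα1
    nlinarith
  calc Complex.abs _ ≤ _ + _ := Complex.abs.add_le _ _
  _ ≤ (8 + 4/(1-α)) * δ ^ α + 8 * δ ^ α := add_le_add hT1 hT2
  _ = (16 + 4/(1-α)) * δ ^ α := by ring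
lemma auxG1_pointwise {α : ℝ} (hα0 : 0 < α) (hα1 : α < 1) (L : NNReal)
    (θ : ℂ → ℝ) (hLip : LipschitzWith L θ)
    (hθ01 : ∀ z : ℂ, 0 ≤ θ z ∧ θ z ≤ 1)
    (hθa : ∀ z : ℂ, Complex.abs z ≤ 1 → θ z = 1)
    (hθb : ∀ z : ℂ, 2 ≤ Complex.abs z → θ z = 0)
    {z w : ℂ} (hsw : Complex.abs w ≤ Complex.abs z) :
    Complex.abs ((θ z : ℂ) * z * (Real.log (Complex.abs z ^ 2) : ℂ)
        - (θ w : ℂ) * w * (Real.log (Complex.abs w ^ 2) : ℂ))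
      ≤ (8 * (L : ℝ) + 24 + 4 / (1 - α)) * Complex.abs (z - w) ^ α := by
  have h1α : (0:ℝ) < 1 - α := by linarith
  have hL0 : (0:ℝ) ≤ (L : ℝ) := L.coe_nonneg
  have hθd : ∀ a b : ℂ, |θ a - θ b| ≤ (L : ℝ) * Complex.abs (a - b) := by
    intro a b
    have := hLip.dist_le_mul a b
    simpa [Real.dist_eq, Complex.dist_eq, Complex.norm_eq_abs] using this
  have hL1 : (1:ℝ) ≤ (L : ℝ) := by
    have h1 : θ 1 = 1 := hθa 1 (by simp)
    have h2 : θ 2 = 0 := hθb 2 (by rw [← Complex.norm_eq_abs]; norm_num)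
    have := hθd 1 2
    rw [h1, h2] at this
    norm_num at this
    exact this
  set r := Complex.abs z with hr
  set s := Complex.abs w with hs
  set δ := Complex.abs (z - w) with hδ
  have hδ0 : 0 ≤ δ := Complex.abs.nonneg _
  have hpow : 0 ≤ δ ^ α := Real.rpow_nonneg hδ0 α
  have hrs : r - s ≤ δ := by
    have := norm_sub_norm_le z w
    simpa [Complex.norm_eq_abs, ← hr, ← hs, ← hδ] using this
  have hdivnn : (0:ℝ) ≤ 4 / (1 - α) := by positivity
  rcases le_or_gt r 2 with hr2 | hr2
  · -- both inside the ball of radius 2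
    have hid : (θ z : ℂ) * z * (Real.log (r ^ 2) : ℂ) - (θ w : ℂ) * w * (Real.log (s ^ 2) : ℂ)
        = ((θ z - θ w : ℝ) : ℂ) * (z * (Real.log (r ^ 2) : ℂ))
          + (θ w : ℂ) * (z * (Real.log (r ^ 2) : ℂ) - w * (Real.log (s ^ 2) : ℂ)) := by
      push_cast; ring
    rw [hid]
    have hθH : |θ z - θ w| ≤ ((L : ℝ) + 1) * δ ^ α := by
      refine auxG1_min_bound (K := (L : ℝ) + 1) (M := 1) hα0 hα1 hδ0 ?_ ?_
        (by linarith) (by norm_num)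
      · have := hθd z w
        rw [← hδ] at this
        nlinarith
      · have h01z := hθ01 z; have h01w := hθ01 w
        rw [abs_le]
        constructor <;> [linarith [h01z.1, h01w.2]; linarith [h01z.2, h01w.1]]
    have hfb : Complex.abs (z * (Real.log (r ^ 2) : ℂ)) ≤ 4 := auxG1_f_bound hr2
    have hfH : Complex.abs (z * (Real.log (r ^ 2) : ℂ) - w * (Real.log (s ^ 2) : ℂ))
        ≤ (16 + 4/(1-α)) * δ ^ α := auxG1_f_holder hα0 hα1 hsw hr2
    have hθw01 := hθ01 w
    calc Complex.abs _ ≤ _ + _ := Complex.abs.add_le _ _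
    _ ≤ ((L : ℝ) + 1) * δ ^ α * 4 + 1 * ((16 + 4/(1-α)) * δ ^ α) := by
        have e1 : Complex.abs (((θ z - θ w : ℝ) : ℂ) * (z * (Real.log (r ^ 2) : ℂ)))
            = |θ z - θ w| * Complex.abs (z * (Real.log (r ^ 2) : ℂ)) := by
          rw [map_mul, Complex.abs_ofReal]
        have e2 : Complex.abs ((θ w : ℂ)
              * (z * (Real.log (r ^ 2) : ℂ) - w * (Real.log (s ^ 2) : ℂ)))
            = θ w * Complex.abs (z * (Real.log (r ^ 2) : ℂ) - w * (Real.log (s ^ 2) : ℂ)) := by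
          rw [map_mul, Complex.abs_ofReal, abs_of_nonneg hθw01.1]
        rw [e1, e2]
        apply add_le_add
        · exact mul_le_mul hθH hfb (Complex.abs.nonneg _) (by nlinarith)
        · exact mul_le_mul hθw01.2 hfH (Complex.abs.nonneg _) (by norm_num)
    _ ≤ (8 * (L : ℝ) + 24 + 4/(1-α)) * δ ^ α := by nlinarith
  · -- |z| > 2 : θ z = 0
    have hθz : θ z = 0 := hθb z (by rw [← hr]; linarith)
    have hzero : (θ z : ℂ) * z * (Real.log (r ^ 2) : ℂ) = 0 := by
      rw [hθz]; push_cast; ring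
    rw [hzero, zero_sub, Complex.abs.map_neg]
    rcases le_or_gt 2 s with hs2 | hs2
    · have hθw : θ w = 0 := hθb w (by rw [← hs]; exact hs2)
      have hz' : (θ w : ℂ) * w * (Real.log (s ^ 2) : ℂ) = 0 := by
        rw [hθw]; push_cast; ring
      rw [hz', map_zero]
      exact mul_nonneg (by linarith) hpow
    · -- s < 2
      have hfwb : Complex.abs (w * (Real.log (s ^ 2) : ℂ)) ≤ 4 :=
        auxG1_f_bound (by rw [← hs]; linarith)
      have habs : Complex.abs ((θ w : ℂ) * w * (Real.log (s ^ 2) : ℂ))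
          = θ w * Complex.abs (w * (Real.log (s ^ 2) : ℂ)) := by
        rw [mul_assoc, map_mul, Complex.abs_ofReal, abs_of_nonneg (hθ01 w).1]
      rw [habs]
      have hθwb : θ w ≤ (L : ℝ) * (2 - s) := by
        by_cases hw0 : w = 0
        · have hθ1 : θ w = 1 := hθa w (by rw [hw0]; simp)
          have hs0 : s = 0 := by rw [hs, hw0, map_zero]
          rw [hθ1, hs0]
          nlinarith
        · have hspos : 0 < s := by rw [hs]; exact Complex.abs.pos hw0
          set w' : ℂ := ((2 / s : ℝ) : ℂ) * w with hw'
          have habs' : Complex.abs w' = 2 := by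
            rw [hw', map_mul, Complex.abs_ofReal, ← hs,
              abs_of_pos (by positivity : (0:ℝ) < 2 / s)]
            field_simp
          have hθw' : θ w' = 0 := hθb w' (le_of_eq habs'.symm)
          have hd := hθd w w'
          rw [hθw'] at hd
          have hww' : Complex.abs (w - w') = 2 - s := by
            have hwe : w - w' = ((1 - 2 / s : ℝ) : ℂ) * w := by
              rw [hw']; push_cast; ring
            rw [hwe, map_mul, Complex.abs_ofReal, ← hs,
              abs_of_nonpos (by { have : 1 < 2 / s := (one_lt_div hspos).mpr hs2; linarith })]
            field_simp
            ring
          rw [hww'] at hd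
          calc θ w = θ w - 0 := by ring
          _ ≤ |θ w - 0| := le_abs_self _
          _ ≤ (L : ℝ) * (2 - s) := hd
      have hkey : θ w * Complex.abs (w * (Real.log (s ^ 2) : ℂ))
          ≤ (4 * (L : ℝ)) * δ ^ α := by
        refine auxG1_min_bound (K := 4 * (L : ℝ)) (M := 4) hα0 hα1 hδ0 ?_ ?_
          (by linarith) (by norm_num)
        · have h2s : 2 - s ≤ δ := by linarith
          have hA : θ w * Complex.abs (w * (Real.log (s ^ 2) : ℂ))
              ≤ ((L:ℝ) * (2 - s)) * 4 := by
            apply mul_le_mul hθwb hfwb (Complex.abs.nonneg _)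
            nlinarith
          nlinarith [mul_le_mul_of_nonneg_left h2s hL0]
        · nlinarith [(hθ01 w).1, (hθ01 w).2,
            Complex.abs.nonneg (w * (Real.log (s ^ 2) : ℂ)), hfwb]
      calc θ w * Complex.abs (w * (Real.log (s ^ 2) : ℂ)) ≤ (4 * (L : ℝ)) * δ ^ α := hkey
      _ ≤ (8 * (L : ℝ) + 24 + 4/(1-α)) * δ ^ α := by nlinarith
/-- With `θ` an `L`-Lipschitz cutoff as before and `g₁(z) = θ(z) z log(|z|²)`,
for every `α ∈ (0,1)` there is `C > 0` depending only on `α` and `L` such that for every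
`d ≥ 1`, every measurable `ω ⊆ ℝ^d` of finite measure, and all `u, v ∈ L²(ω)`,
`‖g₁∘u - g₁∘v‖_{L²(ω)} ≤ C |ω|^{(1-α)/2} ‖u - v‖_{L²(ω)}^α`. -/
theorem g_one_L2_holder (α : ℝ) (hα : α ∈ Set.Ioo (0 : ℝ) 1) (L : NNReal) :
    ∃ C : ℝ, 0 < C ∧
      ∀ θ : ℂ → ℝ, LipschitzWith L θ →
        (∀ z : ℂ, 0 ≤ θ z ∧ θ z ≤ 1) →
        (∀ z : ℂ, ‖z‖ ≤ 1 → θ z = 1) →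
        (∀ z : ℂ, 2 ≤ ‖z‖ → θ z = 0) →
        ∀ (d : ℕ), 1 ≤ d →
        ∀ ω : Set (EuclideanSpace ℝ (Fin d)), MeasurableSet ω → volume ω < ⊤ →
        ∀ u v : EuclideanSpace ℝ (Fin d) → ℂ,
          MemLp u 2 (volume.restrict ω) → MemLp v 2 (volume.restrict ω) →
          eLpNorm (fun x => (θ (u x) : ℂ) * u x * (Real.log (‖u x‖ ^ 2) : ℂ)
              - (θ (v x) : ℂ) * v x * (Real.log (‖v x‖ ^ 2) : ℂ))
              2 (volume.restrict ω)
            ≤ ENNReal.ofReal (C * (volume ω).toReal ^ ((1 - α) / 2) *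
                (eLpNorm (fun x => u x - v x) 2 (volume.restrict ω)).toReal ^ α) := by
  obtain ⟨hα0, hα1⟩ := hα
  have h1α : (0:ℝ) < 1 - α := by linarith
  have hL0 : (0:ℝ) ≤ (L : ℝ) := L.coe_nonneg
  refine ⟨8 * (L : ℝ) + 24 + 4 / (1 - α), by positivity, ?_⟩
  set C : ℝ := 8 * (L : ℝ) + 24 + 4 / (1 - α) with hC
  have hC0 : 0 < C := by positivity
  intro θ hLip hθ01 hθa hθb d hd ω hmeas hfin u v hu hv
  -- pointwise Hölder bound
  have hpt : ∀ z w : ℂ,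
      Complex.abs ((θ z : ℂ) * z * (Real.log (Complex.abs z ^ 2) : ℂ)
        - (θ w : ℂ) * w * (Real.log (Complex.abs w ^ 2) : ℂ))
      ≤ C * Complex.abs (z - w) ^ α := by
    intro z w
    rcases le_total (Complex.abs w) (Complex.abs z) with h | h
    · exact auxG1_pointwise hα0 hα1 L θ hLip hθ01 hθa hθb h
    · have := auxG1_pointwise hα0 hα1 L θ hLip hθ01 hθa hθb h
      rwa [Complex.abs.map_sub, Complex.abs.map_sub w z] at this
  set μ := volume.restrict ω with hμ
  set g : EuclideanSpace ℝ (Fin d) → ℂ := fun x => u x - v x with hg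
  have hgm : AEStronglyMeasurable g μ := hu.1.sub hv.1
  have hA : eLpNorm g 2 μ ≠ ⊤ := (hu.sub hv).2.ne
  have hW : volume ω ≠ ⊤ := hfin.ne
  -- step 1 : compare to C * |g|^α
  have step1 : eLpNorm (fun x => (θ (u x) : ℂ) * u x * (Real.log (Complex.abs (u x) ^ 2) : ℂ)
      - (θ (v x) : ℂ) * v x * (Real.log (Complex.abs (v x) ^ 2) : ℂ)) 2 μ
      ≤ eLpNorm (fun x => C * ‖g x‖ ^ α) 2 μ := by
    apply eLpNorm_mono
    intro x
    have hb := hpt (u x) (v x)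
    have hnn : 0 ≤ C * ‖g x‖ ^ α := by
      have : (0:ℝ) ≤ ‖g x‖ ^ α := Real.rpow_nonneg (norm_nonneg _) α
      positivity
    rw [Real.norm_eq_abs, abs_of_nonneg hnn, Complex.norm_eq_abs]
    simpa [hg, Complex.norm_eq_abs] using hb
  -- step 2 : pull out constant
  have step2 : eLpNorm (fun x => C * ‖g x‖ ^ α) 2 μ
      = ENNReal.ofReal C * eLpNorm (fun x => ‖g x‖ ^ α) 2 μ := by
    have he : (fun x => C * ‖g x‖ ^ α) = C • (fun x => ‖g x‖ ^ α) := by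
      ext x; simp [smul_eq_mul]
    rw [he, eLpNorm_const_smul, Real.enorm_eq_ofReal hC0.le]
  -- step 3 : rpow of eLpNorm
  have step3 : eLpNorm (fun x => ‖g x‖ ^ α) 2 μ
      = eLpNorm g (2 * ENNReal.ofReal α) μ ^ α := eLpNorm_norm_rpow g hα0
  -- step 4 : Hölder between exponents
  have hle2 : 2 * ENNReal.ofReal α ≤ 2 := by
    calc 2 * ENNReal.ofReal α ≤ 2 * 1 := by
          gcongr
          exact ENNReal.ofReal_le_one.mpr hα1.le
    _ = 2 := mul_one 2
  have step4 : eLpNorm g (2 * ENNReal.ofReal α) μ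
      ≤ eLpNorm g 2 μ * (volume ω) ^ (1 / (2 * α) - 1 / 2) := by
    have h := eLpNorm_le_eLpNorm_mul_rpow_measure_univ hle2 hgm
    have hμuniv : μ Set.univ = volume ω := Measure.restrict_apply_univ ω
    have hexp : 1 / (2 * ENNReal.ofReal α).toReal - 1 / (2 : ENNReal).toReal
        = 1 / (2 * α) - 1 / 2 := by
      rw [ENNReal.toReal_mul, ENNReal.toReal_ofReal hα0.le]
      norm_num [ENNReal.toReal_ofNat]
    rwa [hμuniv, hexp] at h
  -- combine
  have step5 : eLpNorm g (2 * ENNReal.ofReal α) μ ^ α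
      ≤ eLpNorm g 2 μ ^ α * (volume ω) ^ ((1 - α) / 2) := by
    calc eLpNorm g (2 * ENNReal.ofReal α) μ ^ α
        ≤ (eLpNorm g 2 μ * (volume ω) ^ (1 / (2 * α) - 1 / 2)) ^ α :=
          ENNReal.rpow_le_rpow step4 hα0.le
    _ = eLpNorm g 2 μ ^ α * ((volume ω) ^ (1 / (2 * α) - 1 / 2)) ^ α :=
          ENNReal.mul_rpow_of_nonneg _ _ hα0.le
    _ = eLpNorm g 2 μ ^ α * (volume ω) ^ ((1 - α) / 2) := by
          have hαne : α ≠ 0 := hα0.ne'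
          have he : (1 / (2 * α) - 1 / 2) * α = (1 - α) / 2 := by
            field_simp
          rw [← ENNReal.rpow_mul, he]
  have final : eLpNorm (fun x => (θ (u x) : ℂ) * u x * (Real.log (Complex.abs (u x) ^ 2) : ℂ)
      - (θ (v x) : ℂ) * v x * (Real.log (Complex.abs (v x) ^ 2) : ℂ)) 2 μ
      ≤ ENNReal.ofReal C * (eLpNorm g 2 μ ^ α * (volume ω) ^ ((1 - α) / 2)) := by
    calc _ ≤ eLpNorm (fun x => C * ‖g x‖ ^ α) 2 μ := step1
    _ = ENNReal.ofReal C * eLpNorm g (2 * ENNReal.ofReal α) μ ^ α := by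
        rw [step2, step3]
    _ ≤ ENNReal.ofReal C * (eLpNorm g 2 μ ^ α * (volume ω) ^ ((1 - α) / 2)) := by
        exact mul_le_mul_right step5 _
  refine final.trans (le_of_eq ?_)
  have hr1 : eLpNorm g 2 μ ^ α = ENNReal.ofReal ((eLpNorm g 2 μ).toReal ^ α) := by
    conv_lhs => rw [← ENNReal.ofReal_toReal hA]
    rw [ENNReal.ofReal_rpow_of_nonneg ENNReal.toReal_nonneg hα0.le]
  have hr2 : (volume ω) ^ ((1 - α) / 2)
      = ENNReal.ofReal ((volume ω).toReal ^ ((1 - α) / 2)) := by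
    conv_lhs => rw [← ENNReal.ofReal_toReal hW]
    rw [ENNReal.ofReal_rpow_of_nonneg ENNReal.toReal_nonneg (by linarith : (0:ℝ) ≤ (1-α)/2)]
  rw [hr1, hr2,
    ← ENNReal.ofReal_mul (Real.rpow_nonneg ENNReal.toReal_nonneg α),
    ← ENNReal.ofReal_mul hC0.le]
  congr 1
  ring
end

section
/- Let θ : ℂ → ℝ be Lipschitz continuous with Lipschitz constant L, satisfying 0 ≤ θ ≤ 1, θ(z) = 1 for |z| ≤ 1 and θ(z) = 0 for |z| ≥ 2, and set g₂(z) = (1 − θ(z))·z·log(|z|²) with g₂(0) = 0. Let δ ∈ (0,1), d ≥ 1, and let ω ⊆ ℝ^d be a measurable set. Then there exists C > 0, depending only on δ and L, such that for all u, v ∈ L²(ω) and all measurable ψ : ω → ℂ with ψ ∈ L^{2/(1−δ)}(ω): ∫_ω |g₂(u(x)) − g₂(v(x))| · |ψ(x)| dx ≤ C ( ‖u‖_{L²(ω)}^δ + ‖v‖_{L²(ω)}^δ ) ‖u − v‖_{L²(ω)} ‖ψ‖_{L^{2/(1−δ)}(ω)}. -/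
open MeasureTheory
open scoped ENNReal NNReal



private lemma aux_log_le_rpow_div {δ r : ℝ} (hδ : 0 < δ) (hr : 1 ≤ r) :
    Real.log r ≤ r ^ δ / δ := by
  have h0 : (0:ℝ) < r := lt_of_lt_of_le one_pos hr
  have h1 : Real.log (r ^ δ) ≤ r ^ δ - 1 :=
    Real.log_le_sub_one_of_pos (Real.rpow_pos_of_pos h0 δ)
  rw [Real.log_rpow h0] at h1
  rw [le_div_iff₀ hδ]
  nlinarith

private lemma aux_mul_abs_log_le {s : ℝ} (h0 : 0 ≤ s) (h2 : s ≤ 2) :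
    s * |Real.log s| ≤ 2 := by
  rcases eq_or_lt_of_le h0 with h | h
  · simp [← h]
  rcases le_total s 1 with hs1 | hs1
  · have hlog : Real.log s ≤ 0 := Real.log_nonpos h0 hs1
    have habs : |Real.log s| = -Real.log s := abs_of_nonpos hlog
    have hsq : Real.sqrt s > 0 := Real.sqrt_pos.mpr h
    have hinv : Real.log (Real.sqrt s)⁻¹ ≤ (Real.sqrt s)⁻¹ - 1 :=
      Real.log_le_sub_one_of_pos (by positivity)
    rw [Real.log_inv, Real.log_sqrt h0] at hinv
    -- -log s / 2 ≤ 1/√s - 1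
    have hss : Real.sqrt s * Real.sqrt s = s := Real.mul_self_sqrt h0
    have hsle : Real.sqrt s ≤ 1 := by
      nlinarith [Real.sqrt_nonneg s]
    have hb : -Real.log s ≤ 2 / Real.sqrt s := by
      rw [div_eq_mul_inv]
      nlinarith
    calc s * |Real.log s| = s * (-Real.log s) := by rw [habs]
      _ ≤ s * (2 / Real.sqrt s) := by
          apply mul_le_mul_of_nonneg_left hb h0
      _ = 2 * Real.sqrt s := by
          rw [eq_comm]
          field_simp
          nlinarith
      _ ≤ 2 := by nlinarith
  · have hlog : 0 ≤ Real.log s := Real.log_nonneg hs1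
    have habs : |Real.log s| = Real.log s := abs_of_nonneg hlog
    have h1 : Real.log s ≤ s - 1 := Real.log_le_sub_one_of_pos h
    rw [habs]
    nlinarith


noncomputable def Haux (z : ℂ) : ℂ := z * (Real.log (‖z‖ ^ 2) : ℂ)

lemma Haux_norm (z : ℂ) : ‖Haux z‖ = ‖z‖ * |Real.log (‖z‖ ^ 2)| := by
  rw [Haux, norm_mul, Complex.norm_real, Real.norm_eq_abs]

lemma Haux_norm' (z : ℂ) : ‖Haux z‖ = ‖z‖ * (2 * |Real.log (‖z‖)|) := by
  rw [Haux_norm, Real.log_pow]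
  push_cast
  rw [abs_mul]
  simp

lemma Haux_norm_le_four {w : ℂ} (h : ‖w‖ ≤ 2) : ‖Haux w‖ ≤ 4 := by
  rw [Haux_norm']
  have := aux_mul_abs_log_le (norm_nonneg w) h
  nlinarith [abs_nonneg (Real.log (‖w‖)), norm_nonneg w]


set_option maxHeartbeats 1000000 in
lemma Haux_diff_le {δ : ℝ} (hδ : δ ∈ Set.Ioo (0:ℝ) 1) (z w : ℂ)
    (hsr : ‖w‖ ≤ ‖z‖) (hr : 1 ≤ ‖z‖) :
    ‖Haux z - Haux w‖ ≤ (8 + 6/δ) * ‖z‖ ^ δ * ‖z - w‖ := by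
  obtain ⟨hδ0, hδ1⟩ := hδ
  set r := ‖z‖ with hrdef
  set s := ‖w‖ with hsdef
  have hr0 : (0:ℝ) < r := lt_of_lt_of_le one_pos hr
  have hs0 : (0:ℝ) ≤ s := norm_nonneg w
  have hrd1 : (1:ℝ) ≤ r ^ δ := Real.one_le_rpow hr hδ0.le
  have hrd0 : (0:ℝ) < r ^ δ := lt_of_lt_of_le one_pos hrd1
  have hlogr : Real.log r ≤ r ^ δ / δ := aux_log_le_rpow_div hδ0 hr
  have hlogr0 : 0 ≤ Real.log r := Real.log_nonneg hr
  have hzw : r - s ≤ ‖z - w‖ := by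
    have := norm_sub_norm_le z w
    simpa using this
  have hzwnn : (0:ℝ) ≤ ‖z - w‖ := norm_nonneg _
  have hd : (0:ℝ) < δ⁻¹ := by positivity
  rcases le_total s (1/2) with hs | hs
  · -- small s case
    have h2zw : r ≤ 2 * ‖z - w‖ := by nlinarith
    have hHz : ‖Haux z‖ ≤ 2 * (r ^ δ / δ) * r := by
      rw [Haux_norm', ← hrdef, abs_of_nonneg hlogr0]
      nlinarith
    have hHw : ‖Haux w‖ ≤ 4 := Haux_norm_le_four (by rw [← hsdef]; nlinarith)
    have htri : ‖Haux z - Haux w‖ ≤ ‖Haux z‖ + ‖Haux w‖ := norm_sub_le _ _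
    have h4 : (4:ℝ) ≤ 4 * (r ^ δ * r) := by nlinarith
    calc ‖Haux z - Haux w‖ ≤ 2 * (r ^ δ / δ) * r + 4 := by linarith
      _ ≤ (2/δ + 4) * (r ^ δ * r) := by rw [div_eq_mul_inv, div_eq_mul_inv]; nlinarith
      _ ≤ (2/δ + 4) * (r ^ δ * (2 * ‖z - w‖)) := by
          apply mul_le_mul_of_nonneg_left _ (by positivity)
          exact mul_le_mul_of_nonneg_left h2zw hrd0.le
      _ ≤ (8 + 6/δ) * r ^ δ * ‖z - w‖ := by
          rw [div_eq_mul_inv, div_eq_mul_inv]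
          nlinarith [mul_nonneg (mul_nonneg hd.le hrd0.le) hzwnn]
  · -- s ≥ 1/2
    have hs0' : (0:ℝ) < s := by linarith
    have hrne : (r:ℂ) ≠ 0 := Complex.ofReal_ne_zero.mpr hr0.ne'
    set z' : ℂ := ((s/r : ℝ) : ℂ) * z with hz'def
    have habsz' : ‖z'‖ = s := by
      rw [hz'def, norm_mul, Complex.norm_real, Real.norm_eq_abs, ← hrdef,
        abs_of_nonneg (by positivity : (0:ℝ) ≤ s/r)]
      field_simp
    have hmono : s * Real.log s ≤ r * Real.log r := by
      rcases le_total s 1 with h1 | h1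
      · have : Real.log s ≤ 0 := Real.log_nonpos hs0 h1
        nlinarith
      · have h2 : 0 ≤ Real.log s := Real.log_nonneg h1
        exact mul_le_mul hsr (Real.log_le_log hs0' hsr) h2 (le_of_lt hr0)
    have hupper : r * Real.log r - s * Real.log s ≤ (r - s) * (r ^ δ / δ + 1) := by
      have hlog_div := Real.log_le_sub_one_of_pos (show (0:ℝ) < r/s by positivity)
      rw [Real.log_div (ne_of_gt hr0) (ne_of_gt hs0')] at hlog_div
      have h1 : s * (Real.log r - Real.log s) ≤ r - s := by
        have h2 : s * (Real.log r - Real.log s) ≤ s * (r/s - 1) :=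
          mul_le_mul_of_nonneg_left hlog_div hs0
        have h3 : s * (r/s - 1) = r - s := by field_simp
        linarith
      nlinarith [mul_le_mul_of_nonneg_left hlogr (show (0:ℝ) ≤ r - s by linarith)]
    have hpiece1 : ‖Haux z - Haux z'‖ = 2 * (r * Real.log r - s * Real.log s) := by
      have heq : Haux z - Haux z' =
          (z * ((r:ℂ))⁻¹) * (((r * Real.log (r^2) - s * Real.log (s^2)) : ℝ) : ℂ) := by
        rw [Haux, Haux, habsz', hz'def, ← hrdef]
        push_cast
        field_simp
      rw [heq, norm_mul, norm_mul, norm_inv]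
      simp only [Complex.norm_real, Real.norm_eq_abs,
        ← hrdef]
      rw [abs_of_pos hr0, Real.log_pow, Real.log_pow]
      push_cast
      rw [abs_of_nonneg (by nlinarith : (0:ℝ) ≤ r * (2 * Real.log r) - s * (2 * Real.log s))]
      field_simp
    have hz'z : ‖z - z'‖ = r - s := by
      have heq : z - z' = (((1 - s/r) : ℝ) : ℂ) * z := by
        rw [hz'def]; push_cast; field_simp
      rw [heq, norm_mul, Complex.norm_real, Real.norm_eq_abs, ← hrdef,
        abs_of_nonneg (by rw [sub_nonneg]; exact (div_le_one hr0).mpr hsr)]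
      field_simp
    have hz'w : ‖z' - w‖ ≤ 2 * ‖z - w‖ := by
      calc ‖z' - w‖ ≤ ‖z' - z‖ + ‖z - w‖ := norm_sub_le_norm_sub_add_norm_sub _ _ _
        _ = (r - s) + ‖z - w‖ := by rw [norm_sub_rev, hz'z]
        _ ≤ 2 * ‖z - w‖ := by linarith
    have hlogs_abs : |Real.log s| ≤ 1 + r ^ δ / δ := by
      rcases le_total s 1 with h1 | h1
      · have hln : Real.log s ≤ 0 := Real.log_nonpos hs0 h1
        rw [abs_of_nonpos hln]
        have hinv := Real.log_le_sub_one_of_pos (show (0:ℝ) < s⁻¹ by positivity)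
        rw [Real.log_inv] at hinv
        have : s⁻¹ ≤ 2 := by
          rw [inv_le_comm₀ hs0' (by norm_num)]; linarith
        have hdd : 0 ≤ r ^ δ / δ := by positivity
        linarith
      · have hln : 0 ≤ Real.log s := Real.log_nonneg h1
        rw [abs_of_nonneg hln]
        have := Real.log_le_log hs0' hsr
        linarith
    have hpiece2 : ‖Haux z' - Haux w‖ ≤ (2 * (1 + r ^ δ / δ)) * (2 * ‖z - w‖) := by
      have heq : Haux z' - Haux w = (z' - w) * ((Real.log (s^2) : ℝ) : ℂ) := by
        rw [Haux, Haux, habsz', ← hsdef]; ring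
      rw [heq, norm_mul, Complex.norm_real, Real.norm_eq_abs]
      have habs2 : |Real.log (s^2)| ≤ 2 * (1 + r ^ δ / δ) := by
        rw [Real.log_pow]
        push_cast
        rw [abs_mul, abs_two]
        linarith
      have h1 : (0:ℝ) ≤ |Real.log (s^2)| := abs_nonneg _
      calc ‖z' - w‖ * |Real.log (s^2)| ≤ (2 * ‖z - w‖) * (2 * (1 + r ^ δ / δ)) :=
            mul_le_mul hz'w habs2 h1 (by positivity)
        _ = (2 * (1 + r ^ δ / δ)) * (2 * ‖z - w‖) := by ring
    have htri : ‖Haux z - Haux w‖ ≤ ‖Haux z - Haux z'‖ + ‖Haux z' - Haux w‖ :=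
      norm_sub_le_norm_sub_add_norm_sub _ _ _
    have hfin : 2 * ((r - s) * (r ^ δ / δ + 1)) + (2 * (1 + r ^ δ / δ)) * (2 * ‖z - w‖)
        ≤ (8 + 6/δ) * r ^ δ * ‖z - w‖ := by
      have h1 : (r - s) * (r ^ δ / δ + 1) ≤ ‖z - w‖ * (r ^ δ / δ + 1) :=
        mul_le_mul_of_nonneg_right hzw (by positivity)
      have h2 : (1 : ℝ) + r ^ δ / δ ≤ r ^ δ + r ^ δ / δ := by linarith
      simp only [div_eq_mul_inv] at h1 h2 ⊢
      nlinarith [h1, mul_le_mul_of_nonneg_right h2 hzwnn,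
        mul_nonneg (sub_nonneg.mpr hrd1) hzwnn]
    calc ‖Haux z - Haux w‖ ≤ ‖Haux z - Haux z'‖ + ‖Haux z' - Haux w‖ := htri
      _ ≤ 2 * ((r - s) * (r ^ δ / δ + 1)) + (2 * (1 + r ^ δ / δ)) * (2 * ‖z - w‖) := by
          rw [hpiece1]
          exact add_le_add (by linarith [hupper]) hpiece2
      _ ≤ (8 + 6/δ) * r ^ δ * ‖z - w‖ := hfin


noncomputable def gaux (θ : ℂ → ℝ) (z : ℂ) : ℂ :=
  (((1:ℝ) - θ z : ℝ) : ℂ) * z * (Real.log (‖z‖ ^ 2) : ℂ)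

lemma gaux_asym {δ : ℝ} (hδ : δ ∈ Set.Ioo (0:ℝ) 1) {L : NNReal} {θ : ℂ → ℝ}
    (hlip : LipschitzWith L θ) (h01 : ∀ z : ℂ, 0 ≤ θ z ∧ θ z ≤ 1)
    (hone : ∀ z : ℂ, ‖z‖ ≤ 1 → θ z = 1)
    (htwo : ∀ z : ℂ, 2 ≤ ‖z‖ → θ z = 0)
    (z w : ℂ) (hsr : ‖w‖ ≤ ‖z‖) :
    ‖gaux θ z - gaux θ w‖ ≤ (8 + 6/δ + 4*(L:ℝ)) * ‖z‖ ^ δ * ‖z - w‖ := by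
  obtain ⟨hδ0, hδ1⟩ := hδ
  have hCpos : (0:ℝ) < 8 + 6/δ + 4*(L:ℝ) := by positivity
  rcases le_or_gt (‖z‖) 1 with h1 | h1
  · rw [gaux, gaux, hone z h1, hone w (le_trans hsr h1)]
    simp only [sub_self, Complex.ofReal_zero, zero_mul, sub_zero, norm_zero]
    positivity
  · have hr : 1 ≤ ‖z‖ := h1.le
    have hrd1 : (1:ℝ) ≤ ‖z‖ ^ δ := Real.one_le_rpow hr hδ0.le
    have hzwnn : (0:ℝ) ≤ ‖z - w‖ := norm_nonneg _
    have hdecomp : gaux θ z - gaux θ w =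
        (((1:ℝ) - θ z : ℝ) : ℂ) * (Haux z - Haux w) + ((θ w - θ z : ℝ) : ℂ) * Haux w := by
      rw [gaux, gaux, Haux, Haux]
      push_cast
      ring
    have hT1 : ‖(((1:ℝ) - θ z : ℝ) : ℂ) * (Haux z - Haux w)‖ ≤
        (8 + 6/δ) * ‖z‖ ^ δ * ‖z - w‖ := by
      rw [norm_mul, Complex.norm_real, Real.norm_eq_abs]
      have hb1 : |1 - θ z| ≤ 1 := by
        rw [abs_le]; constructor <;> [linarith [(h01 z).2]; linarith [(h01 z).1]]
      calc |1 - θ z| * ‖Haux z - Haux w‖ ≤ 1 * ‖Haux z - Haux w‖ :=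
            mul_le_mul_of_nonneg_right hb1 (norm_nonneg _)
        _ = ‖Haux z - Haux w‖ := one_mul _
        _ ≤ (8 + 6/δ) * ‖z‖ ^ δ * ‖z - w‖ := Haux_diff_le ⟨hδ0, hδ1⟩ z w hsr hr
    have hT2 : ‖((θ w - θ z : ℝ) : ℂ) * Haux w‖ ≤ 4*(L:ℝ) * ‖z‖ ^ δ * ‖z - w‖ := by
      rcases le_or_gt 2 (‖w‖) with h2 | h2
      · rw [htwo w h2, htwo z (le_trans h2 hsr), sub_self]
        simp only [Complex.ofReal_zero, zero_mul, norm_zero]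
        positivity
      · rw [norm_mul, Complex.norm_real, Real.norm_eq_abs]
        have hb1 : |θ w - θ z| ≤ (L:ℝ) * ‖z - w‖ := by
          have := hlip.dist_le_mul w z
          rw [Real.dist_eq, Complex.dist_eq] at this
          rw [norm_sub_rev] at this
          exact this
        have hb2 : ‖Haux w‖ ≤ 4 := Haux_norm_le_four h2.le
        calc |θ w - θ z| * ‖Haux w‖ ≤ ((L:ℝ) * ‖z - w‖) * 4 :=
              mul_le_mul hb1 hb2 (norm_nonneg _) (by positivity)
          _ = 4*(L:ℝ) * 1 * ‖z - w‖ := by ring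
          _ ≤ 4*(L:ℝ) * ‖z‖ ^ δ * ‖z - w‖ := by
              apply mul_le_mul_of_nonneg_right _ hzwnn
              apply mul_le_mul_of_nonneg_left hrd1 (by positivity)
    calc ‖gaux θ z - gaux θ w‖
        ≤ ‖(((1:ℝ) - θ z : ℝ) : ℂ) * (Haux z - Haux w)‖ + ‖((θ w - θ z : ℝ) : ℂ) * Haux w‖ := by
          rw [hdecomp]; exact norm_add_le _ _
      _ ≤ (8 + 6/δ) * ‖z‖ ^ δ * ‖z - w‖ + 4*(L:ℝ) * ‖z‖ ^ δ * ‖z - w‖ :=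
          add_le_add hT1 hT2
      _ = (8 + 6/δ + 4*(L:ℝ)) * ‖z‖ ^ δ * ‖z - w‖ := by ring

lemma gaux_sym {δ : ℝ} (hδ : δ ∈ Set.Ioo (0:ℝ) 1) {L : NNReal} {θ : ℂ → ℝ}
    (hlip : LipschitzWith L θ) (h01 : ∀ z : ℂ, 0 ≤ θ z ∧ θ z ≤ 1)
    (hone : ∀ z : ℂ, ‖z‖ ≤ 1 → θ z = 1)
    (htwo : ∀ z : ℂ, 2 ≤ ‖z‖ → θ z = 0)
    (z w : ℂ) :
    ‖gaux θ z - gaux θ w‖ ≤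
      (8 + 6/δ + 4*(L:ℝ)) * (‖z‖ ^ δ + ‖w‖ ^ δ) * ‖z - w‖ := by
  obtain ⟨hδ0, hδ1⟩ := hδ
  have hC : (0:ℝ) < 8 + 6/δ + 4*(L:ℝ) := by positivity
  have hza : (0:ℝ) ≤ ‖z‖ ^ δ := Real.rpow_nonneg (norm_nonneg z) δ
  have hwa : (0:ℝ) ≤ ‖w‖ ^ δ := Real.rpow_nonneg (norm_nonneg w) δ
  rcases le_total (‖w‖) (‖z‖) with hc | hc
  · calc ‖gaux θ z - gaux θ w‖ ≤ (8 + 6/δ + 4*(L:ℝ)) * ‖z‖ ^ δ * ‖z - w‖ :=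
        gaux_asym ⟨hδ0, hδ1⟩ hlip h01 hone htwo z w hc
      _ ≤ _ := by
        apply mul_le_mul_of_nonneg_right _ (norm_nonneg _)
        apply mul_le_mul_of_nonneg_left _ hC.le
        linarith
  · rw [norm_sub_rev (gaux θ z), norm_sub_rev z w]
    calc ‖gaux θ w - gaux θ z‖ ≤ (8 + 6/δ + 4*(L:ℝ)) * ‖w‖ ^ δ * ‖w - z‖ :=
        gaux_asym ⟨hδ0, hδ1⟩ hlip h01 hone htwo w z hc
      _ ≤ _ := by
        apply mul_le_mul_of_nonneg_right _ (norm_nonneg _)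
        apply mul_le_mul_of_nonneg_left _ hC.le
        linarith

lemma holder3 {α : Type*} [MeasurableSpace α] {μ : Measure α} {f g h : α → ℝ≥0∞}
    (hf : AEMeasurable f μ) (hg : AEMeasurable g μ) (hh : AEMeasurable h μ)
    {p q r : ℝ} (hp : 0 ≤ p) (hq : 0 ≤ q) (hr : 0 ≤ r) (hpqr : p + q + r = 1) :
    ∫⁻ a, f a ^ p * g a ^ q * h a ^ r ∂μ ≤
      (∫⁻ a, f a ∂μ) ^ p * (∫⁻ a, g a ∂μ) ^ q * (∫⁻ a, h a ∂μ) ^ r := by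
  have := ENNReal.lintegral_prod_norm_pow_le (μ := μ) (Finset.univ : Finset (Fin 3))
    (f := ![f, g, h]) (p := ![p, q, r]) ?_ ?_ ?_
  · simpa [Fin.prod_univ_three] using this
  · intro i _; fin_cases i <;> simpa
  · simp [Fin.sum_univ_three]; linarith
  · intro i _; fin_cases i <;> simpa

lemma holder_app {α : Type*} [MeasurableSpace α] {μ : Measure α} {δ : ℝ}
    (hδ : δ ∈ Set.Ioo (0:ℝ) 1) {u w ψ : α → ℂ}
    (hu : AEStronglyMeasurable u μ) (hw : AEStronglyMeasurable w μ)
    (hψ : AEStronglyMeasurable ψ μ) :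
    ∫⁻ x, (‖u x‖₊ : ℝ≥0∞) ^ δ * ((‖w x‖₊ : ℝ≥0∞) * (‖ψ x‖₊ : ℝ≥0∞)) ∂μ ≤
      (eLpNorm u 2 μ) ^ δ * (eLpNorm w 2 μ * eLpNorm ψ (ENNReal.ofReal (2/(1-δ))) μ) := by
  obtain ⟨hδ0, hδ1⟩ := hδ
  have h1δ : (0:ℝ) < 1 - δ := by linarith
  have hQ0 : ENNReal.ofReal (2/(1-δ)) ≠ 0 := by
    simp only [ne_eq, ENNReal.ofReal_eq_zero, not_le]
    positivity
  have hQtop : ENNReal.ofReal (2/(1-δ)) ≠ ∞ := ENNReal.ofReal_ne_top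
  have hQto : (ENNReal.ofReal (2/(1-δ))).toReal = 2/(1-δ) :=
    ENNReal.toReal_ofReal (by positivity)
  have key : ∀ x, (‖u x‖₊ : ℝ≥0∞) ^ δ * ((‖w x‖₊ : ℝ≥0∞) * (‖ψ x‖₊ : ℝ≥0∞)) =
      ((‖u x‖₊ : ℝ≥0∞) ^ (2:ℝ)) ^ (δ/2) * ((‖w x‖₊ : ℝ≥0∞) ^ (2:ℝ)) ^ (1/2:ℝ) *
        ((‖ψ x‖₊ : ℝ≥0∞) ^ ((2:ℝ)/(1-δ))) ^ ((1-δ)/2) := by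
    intro x
    rw [← ENNReal.rpow_mul, ← ENNReal.rpow_mul, ← ENNReal.rpow_mul,
      show (2:ℝ) * (δ/2) = δ by ring, show (2:ℝ) * (1/2:ℝ) = 1 by ring,
      show (2:ℝ)/(1-δ) * ((1-δ)/2) = 1 by field_simp,
      ENNReal.rpow_one, ENNReal.rpow_one]
    ring
  simp_rw [key]
  refine le_trans (holder3 (hu.enorm.pow_const _) (hw.enorm.pow_const _)
    (hψ.enorm.pow_const _) (by positivity) (by norm_num) (by linarith) (by ring)) ?_
  have e1 : (∫⁻ x, (‖u x‖₊:ℝ≥0∞)^(2:ℝ) ∂μ) ^ (δ/2) = eLpNorm u 2 μ ^ δ := by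
    rw [eLpNorm_eq_lintegral_rpow_enorm_toReal two_ne_zero ENNReal.ofNat_ne_top, ← ENNReal.rpow_mul]
    norm_num
    congr 1
    ring
  have e2 : (∫⁻ x, (‖w x‖₊:ℝ≥0∞)^(2:ℝ) ∂μ) ^ (1/2:ℝ) = eLpNorm w 2 μ := by
    rw [eLpNorm_eq_lintegral_rpow_enorm_toReal two_ne_zero ENNReal.ofNat_ne_top]
    norm_num
    rfl
  have e3 : (∫⁻ x, (‖ψ x‖₊:ℝ≥0∞)^((2:ℝ)/(1-δ)) ∂μ) ^ ((1-δ)/2) =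
      eLpNorm ψ (ENNReal.ofReal (2/(1-δ))) μ := by
    rw [eLpNorm_eq_lintegral_rpow_enorm_toReal hQ0 hQtop, hQto,
      show 1/((2:ℝ)/(1-δ)) = (1-δ)/2 by field_simp]
    rfl
  show (∫⁻ x, (‖u x‖₊:ℝ≥0∞)^(2:ℝ) ∂μ) ^ (δ/2) * (∫⁻ x, (‖w x‖₊:ℝ≥0∞)^(2:ℝ) ∂μ) ^ (1/2:ℝ) *
    (∫⁻ x, (‖ψ x‖₊:ℝ≥0∞)^((2:ℝ)/(1-δ)) ∂μ) ^ ((1-δ)/2) ≤ _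
  rw [e1, e2, e3, mul_assoc]
set_option maxHeartbeats 1000000 in
/-- With `θ` an `L`-Lipschitz cutoff as before and `g₂(z) = (1-θ(z)) z log(|z|²)`,
for every `δ ∈ (0,1)` there is `C > 0` depending only on `δ` and `L` such that for every
`d ≥ 1`, every measurable `ω ⊆ ℝ^d`, all `u, v ∈ L²(ω)` and every measurable
`ψ ∈ L^{2/(1-δ)}(ω)`,
`∫_ω |g₂∘u - g₂∘v| |ψ| ≤ C (‖u‖_{L²}^δ + ‖v‖_{L²}^δ) ‖u - v‖_{L²} ‖ψ‖_{L^{2/(1-δ)}}`. -/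
theorem g_two_dual_estimate (δ : ℝ) (hδ : δ ∈ Set.Ioo (0 : ℝ) 1) (L : NNReal) :
    ∃ C : ℝ, 0 < C ∧
      ∀ θ : ℂ → ℝ, LipschitzWith L θ →
        (∀ z : ℂ, 0 ≤ θ z ∧ θ z ≤ 1) →
        (∀ z : ℂ, ‖z‖ ≤ 1 → θ z = 1) →
        (∀ z : ℂ, 2 ≤ ‖z‖ → θ z = 0) →
        ∀ (d : ℕ), 1 ≤ d →
        ∀ ω : Set (EuclideanSpace ℝ (Fin d)), MeasurableSet ω →
        ∀ u v ψ : EuclideanSpace ℝ (Fin d) → ℂ,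
          MemLp u 2 (volume.restrict ω) → MemLp v 2 (volume.restrict ω) →
          MemLp ψ (ENNReal.ofReal (2 / (1 - δ))) (volume.restrict ω) →
          (∫⁻ x in ω,
              ‖((1 : ℝ) - θ (u x) : ℝ) * u x * (Real.log (‖u x‖ ^ 2) : ℂ)
                - ((1 : ℝ) - θ (v x) : ℝ) * v x * (Real.log (‖v x‖ ^ 2) : ℂ)‖₊
                * ‖ψ x‖₊ ∂volume)
            ≤ ENNReal.ofReal (C *
                ((eLpNorm u 2 (volume.restrict ω)).toReal ^ δ
                  + (eLpNorm v 2 (volume.restrict ω)).toReal ^ δ) *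
                (eLpNorm (fun x => u x - v x) 2 (volume.restrict ω)).toReal *
                (eLpNorm ψ (ENNReal.ofReal (2 / (1 - δ))) (volume.restrict ω)).toReal) := by
  obtain ⟨hδ0, hδ1⟩ := hδ
  have h1δ : (0:ℝ) < 1 - δ := by linarith
  refine ⟨8 + 6/δ + 4*(L:ℝ), by positivity, ?_⟩
  intro θ hlip h01 hone htwo d hd ω hω u v ψ hu hv hψ
  set C : ℝ := 8 + 6/δ + 4*(L:ℝ) with hCdef
  have hC : 0 < C := by rw [hCdef]; positivity
  clear_value C
  set μ : Measure (EuclideanSpace ℝ (Fin d)) := volume.restrict ω with hμdef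
  set Q : ℝ≥0∞ := ENNReal.ofReal (2 / (1 - δ)) with hQdef
  have huv : MemLp (fun x => u x - v x) 2 μ := hu.sub hv
  have hEu : eLpNorm u 2 μ ≠ ∞ := hu.eLpNorm_ne_top
  have hEv : eLpNorm v 2 μ ≠ ∞ := hv.eLpNorm_ne_top
  have hEuv : eLpNorm (fun x => u x - v x) 2 μ ≠ ∞ := huv.eLpNorm_ne_top
  have hEψ : eLpNorm ψ Q μ ≠ ∞ := hψ.eLpNorm_ne_top
  have hmu : AEStronglyMeasurable u μ := hu.aestronglyMeasurable
  have hmv : AEStronglyMeasurable v μ := hv.aestronglyMeasurable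
  have hmψ : AEStronglyMeasurable ψ μ := hψ.aestronglyMeasurable
  have hmuv : AEStronglyMeasurable (fun x => u x - v x) μ := hmu.sub hmv
  -- pointwise bound
  have hpt : ∀ x, (‖gaux θ (u x) - gaux θ (v x)‖₊ : ℝ≥0∞) * (‖ψ x‖₊ : ℝ≥0∞) ≤
      ENNReal.ofReal C * (((‖u x‖₊:ℝ≥0∞) ^ δ + (‖v x‖₊:ℝ≥0∞) ^ δ) *
        ((‖u x - v x‖₊:ℝ≥0∞) * (‖ψ x‖₊:ℝ≥0∞))) := by
    intro x
    have h1 := gaux_sym ⟨hδ0, hδ1⟩ hlip h01 hone htwo (u x) (v x)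
    rw [← hCdef] at h1
    have h2 : ‖gaux θ (u x) - gaux θ (v x)‖ * ‖ψ x‖ ≤
        C * ((‖u x‖^δ + ‖v x‖^δ) * (‖u x - v x‖ * ‖ψ x‖)) := by
      have h3 := mul_le_mul_of_nonneg_right h1 (norm_nonneg (ψ x))
      rw [show C * ((‖u x‖^δ + ‖v x‖^δ) * (‖u x - v x‖ * ‖ψ x‖)) =
        C * (‖u x‖^δ + ‖v x‖^δ) * ‖u x - v x‖ * ‖ψ x‖ by ring]
      exact h3
    calc (‖gaux θ (u x) - gaux θ (v x)‖₊ : ℝ≥0∞) * (‖ψ x‖₊ : ℝ≥0∞)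
        = ENNReal.ofReal (‖gaux θ (u x) - gaux θ (v x)‖ * ‖ψ x‖) := by
          rw [ENNReal.ofReal_mul (norm_nonneg _), ofReal_norm,
            ofReal_norm, enorm_eq_nnnorm, enorm_eq_nnnorm]
      _ ≤ ENNReal.ofReal (C * ((‖u x‖^δ + ‖v x‖^δ) * (‖u x - v x‖ * ‖ψ x‖))) :=
          ENNReal.ofReal_le_ofReal h2
      _ = ENNReal.ofReal C * (((‖u x‖₊:ℝ≥0∞) ^ δ + (‖v x‖₊:ℝ≥0∞) ^ δ) *
          ((‖u x - v x‖₊:ℝ≥0∞) * (‖ψ x‖₊:ℝ≥0∞))) := by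
          rw [ENNReal.ofReal_mul hC.le, ENNReal.ofReal_mul (by positivity),
            ENNReal.ofReal_add (by positivity) (by positivity),
            ENNReal.ofReal_mul (norm_nonneg _),
            ← ENNReal.ofReal_rpow_of_nonneg (norm_nonneg _) hδ0.le,
            ← ENNReal.ofReal_rpow_of_nonneg (norm_nonneg _) hδ0.le,
            ofReal_norm, ofReal_norm,
            ofReal_norm, ofReal_norm, enorm_eq_nnnorm, enorm_eq_nnnorm,
            enorm_eq_nnnorm, enorm_eq_nnnorm]
  have hm1 : AEMeasurable (fun x => (‖u x‖₊:ℝ≥0∞)^δ *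
      ((‖u x - v x‖₊:ℝ≥0∞) * (‖ψ x‖₊:ℝ≥0∞))) μ :=
    (hmu.enorm.pow_const δ).mul (hmuv.enorm.mul hmψ.enorm)
  have hconv : ENNReal.ofReal (C * ((eLpNorm u 2 μ).toReal ^ δ + (eLpNorm v 2 μ).toReal ^ δ) *
        (eLpNorm (fun x => u x - v x) 2 μ).toReal * (eLpNorm ψ Q μ).toReal)
      = ENNReal.ofReal C * ((eLpNorm u 2 μ ^ δ + eLpNorm v 2 μ ^ δ) *
        (eLpNorm (fun x => u x - v x) 2 μ * eLpNorm ψ Q μ)) := by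
    rw [ENNReal.ofReal_mul (by positivity), ENNReal.ofReal_mul (by positivity),
      ENNReal.ofReal_mul hC.le,
      ENNReal.ofReal_add (by positivity) (by positivity),
      ← ENNReal.ofReal_rpow_of_nonneg ENNReal.toReal_nonneg hδ0.le,
      ← ENNReal.ofReal_rpow_of_nonneg ENNReal.toReal_nonneg hδ0.le,
      ENNReal.ofReal_toReal hEu, ENNReal.ofReal_toReal hEv,
      ENNReal.ofReal_toReal hEuv, ENNReal.ofReal_toReal hEψ]
    ring
  calc (∫⁻ x in ω,
        ‖((1 : ℝ) - θ (u x) : ℝ) * u x * (Real.log (‖u x‖ ^ 2) : ℂ)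
          - ((1 : ℝ) - θ (v x) : ℝ) * v x * (Real.log (‖v x‖ ^ 2) : ℂ)‖₊
          * ‖ψ x‖₊ ∂volume)
      = ∫⁻ x, (‖gaux θ (u x) - gaux θ (v x)‖₊ : ℝ≥0∞) * (‖ψ x‖₊ : ℝ≥0∞) ∂μ := rfl
    _ ≤ ∫⁻ x, ENNReal.ofReal C * (((‖u x‖₊:ℝ≥0∞) ^ δ + (‖v x‖₊:ℝ≥0∞) ^ δ) *
          ((‖u x - v x‖₊:ℝ≥0∞) * (‖ψ x‖₊:ℝ≥0∞))) ∂μ := lintegral_mono hpt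
    _ = ENNReal.ofReal C * ∫⁻ x, ((‖u x‖₊:ℝ≥0∞) ^ δ + (‖v x‖₊:ℝ≥0∞) ^ δ) *
          ((‖u x - v x‖₊:ℝ≥0∞) * (‖ψ x‖₊:ℝ≥0∞)) ∂μ :=
        lintegral_const_mul' _ _ ENNReal.ofReal_ne_top
    _ = ENNReal.ofReal C *
          ((∫⁻ x, (‖u x‖₊:ℝ≥0∞)^δ * ((‖u x - v x‖₊:ℝ≥0∞) * (‖ψ x‖₊:ℝ≥0∞)) ∂μ) +
           (∫⁻ x, (‖v x‖₊:ℝ≥0∞)^δ * ((‖u x - v x‖₊:ℝ≥0∞) * (‖ψ x‖₊:ℝ≥0∞)) ∂μ)) := by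
        congr 1
        simp_rw [add_mul]
        exact lintegral_add_left' hm1 _
    _ ≤ ENNReal.ofReal C *
          ((eLpNorm u 2 μ)^δ * (eLpNorm (fun x => u x - v x) 2 μ * eLpNorm ψ Q μ) +
           (eLpNorm v 2 μ)^δ * (eLpNorm (fun x => u x - v x) 2 μ * eLpNorm ψ Q μ)) :=
        mul_le_mul_right
          (add_le_add (holder_app ⟨hδ0, hδ1⟩ hmu hmuv hmψ)
            (holder_app ⟨hδ0, hδ1⟩ hmv hmuv hmψ)) _
    _ = ENNReal.ofReal (C * ((eLpNorm u 2 μ).toReal ^ δ + (eLpNorm v 2 μ).toReal ^ δ) *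
          (eLpNorm (fun x => u x - v x) 2 μ).toReal * (eLpNorm ψ Q μ).toReal) := by
        rw [hconv]; ring
end
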